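/- Let k be a field, n a natural number, and a : Fin n → ℤ weights with a i ≠ 0 for all i. Let V₀ denote the set of nonzero vectors x : Fin n → k, and let the group kˣ × kˣ act on V₀ × k by ((c,g)·(x,w)) i = c · g^{a i} · x i in the first factor and (c,g)·w = g⁻¹ · w in the second (ℤ-powers taken in kˣ). Define the stable locus S ⊆ V₀ × k to consist of all pairs (x,w) such that either (w ≠ 0 and there exists i with x i ≠ 0 and a i > 0) or (w = 0 and there exist i, j with x i ≠ 0, a i > 0 and x j ≠ 0, a j < 0). Then: (1) S is invariant under the kˣ × kˣ action; (2) the map sending x to the orbit of (x,1) induces a well-defined injection from the quotient of {x ∈ V₀ : ∃ i, x i ≠ 0 ∧ a i > 0} by overall scalar multiplication by kˣ into the orbit space S/(kˣ × kˣ), whose image is exactly the set of orbits of points with w ≠ 0; (3) the map sending x to the orbit of (x,0) induces a well-defined injection from the quotient of {x ∈ V₀ : (∃ i, x i ≠ 0 ∧ a i > 0) ∧ (∃ j, x j ≠ 0 ∧ a j < 0)} by the kˣ × kˣ action ((c,g)·x) i = c · g^{a i} · x i into S/(kˣ × kˣ), whose image is exactly the set of orbits of points with w = 0. Consequently the orbit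 space S/(kˣ × kˣ) is the disjoint union of these two pieces. -/
import Mathlib


open Function

namespace AlgebraicCut

variable (k : Type*) [Field k] (n : ℕ) (a : Fin n → ℤ)

/-- The action of `(c, g) ∈ kˣ × kˣ` on a pair `(x, w)`:
`((c,g) • (x,w)) i = c * g ^ (a i) * x i` and `(c,g) • w = g⁻¹ * w`. -/
def act (c g : kˣ) (p : (Fin n → k) × k) : (Fin n → k) × k :=
  (fun i => (c : k) * ((g ^ a i : kˣ) : k) * p.1 i, ((g⁻¹ : kˣ) : k) * p.2)

/-- The stable locus `S ⊆ V₀ × k`: pairs `(x, w)` with `x ≠ 0` such that either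
(`w ≠ 0` and some coordinate with positive weight is nonzero) or (`w = 0` and
both a positive-weight and a negative-weight coordinate are nonzero). -/
def stable : Set ((Fin n → k) × k) :=
  {p | p.1 ≠ 0 ∧
    ((p.2 ≠ 0 ∧ ∃ i, p.1 i ≠ 0 ∧ 0 < a i) ∨
     (p.2 = 0 ∧ (∃ i, p.1 i ≠ 0 ∧ 0 < a i) ∧ ∃ j, p.1 j ≠ 0 ∧ a j < 0))}

/-- The orbit relation of `kˣ × kˣ` on the stable locus. -/
def orbitRel (p q : stable k n a) : Prop :=
  ∃ c g : kˣ, (q : (Fin n → k) × k) = act k n a c g (p : (Fin n → k) × k)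

/-- `X_{>0}`: nonzero vectors having a nonzero coordinate of positive weight. -/
def XPos : Set (Fin n → k) := {x | x ≠ 0 ∧ ∃ i, x i ≠ 0 ∧ 0 < a i}

/-- Overall scalar multiplication relation on `X_{>0}`. -/
def scalarRel (x y : XPos k n a) : Prop :=
  ∃ c : kˣ, (y : Fin n → k) = fun i => (c : k) * (x : Fin n → k) i

/-- `X^s`: nonzero vectors having nonzero coordinates of both positive and negative
weight. -/
def XStable : Set (Fin n → k) :=
  {x | x ≠ 0 ∧ (∃ i, x i ≠ 0 ∧ 0 < a i) ∧ ∃ j, x j ≠ 0 ∧ a j < 0}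

/-- The `kˣ × kˣ`-orbit relation on `X^s`: `((c,g) • x) i = c * g ^ (a i) * x i`. -/
def fullRel (x y : XStable k n a) : Prop :=
  ∃ c g : kˣ, (y : Fin n → k) = fun i => (c : k) * ((g ^ a i : kˣ) : k) * (x : Fin n → k) i

section Aux

variable {k n a}

lemma act_act (c g c' g' : kˣ) (p : (Fin n → k) × k) :
    act k n a c g (act k n a c' g' p) = act k n a (c * c') (g * g') p := by
  refine Prod.ext (funext fun i => ?_) ?_
  · simp [act, mul_zpow]; ring
  · simp [act]; ring

lemma coord_zero (c g : kˣ) (m : ℤ) {t : k} :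
    (c : k) * ((g ^ m : kˣ) : k) * t = 0 ↔ t = 0 := by
  rw [mul_assoc, Units.mul_right_eq_zero, Units.mul_right_eq_zero]

lemma coord_zero' (g : kˣ) (m : ℤ) {t : k} :
    ((g ^ m : kˣ) : k) * t = 0 ↔ t = 0 :=
  Units.mul_right_eq_zero _

lemma act_one (p : (Fin n → k) × k) : act k n a 1 1 p = p := by
  refine Prod.ext (funext fun i => ?_) ?_ <;> simp [act]

lemma quot_eq' {α : Type*} {r : α → α → Prop} (h : Equivalence r) {x y : α} :
    Quot.mk r x = Quot.mk r y ↔ r x y := by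
  refine ⟨fun he => h.eqvGen_iff.mp ?_, Quot.sound⟩
  exact Quot.eqvGen_exact he

lemma orbitRel_equiv : Equivalence (orbitRel k n a) := by
  refine ⟨fun p => ⟨1, 1, (act_one _).symm⟩, ?_, ?_⟩
  · rintro p q ⟨c, g, h⟩
    exact ⟨c⁻¹, g⁻¹, by rw [h, act_act, inv_mul_cancel, inv_mul_cancel, act_one]⟩
  · rintro p q r ⟨c, g, h⟩ ⟨c', g', h'⟩
    exact ⟨c' * c, g' * g, by rw [h', h, act_act]⟩

end Aux

/-- Auxiliary: the point `(x, 1)` of the stable locus, for `x ∈ X_{>0}`. -/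
def mkPos (x : XPos k n a) : stable k n a :=
  ⟨(x.1, 1), x.2.1, Or.inl ⟨one_ne_zero, x.2.2⟩⟩

/-- Auxiliary: the point `(x, 0)` of the stable locus, for `x ∈ X^s`. -/
def mkZero (x : XStable k n a) : stable k n a :=
  ⟨(x.1, 0), x.2.1, Or.inr ⟨rfl, x.2.2⟩⟩

/-- Auxiliary: the induced map `X_{>0}/kˣ → S/(kˣ × kˣ)`. -/
def fPos : Quot (scalarRel k n a) → Quot (orbitRel k n a) :=
  Quot.lift (fun x => Quot.mk _ (mkPos k n a x)) (by
    rintro x y ⟨c, hc⟩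
    refine Quot.sound ⟨c, 1, ?_⟩
    refine Prod.ext (funext fun i => ?_) ?_
    · show (y : Fin n → k) i = _
      rw [hc]; simp [act, mkPos]
    · simp [act, mkPos])

/-- Auxiliary: the induced map `X^s/(kˣ × kˣ) → S/(kˣ × kˣ)`. -/
def fZero : Quot (fullRel k n a) → Quot (orbitRel k n a) :=
  Quot.lift (fun x => Quot.mk _ (mkZero k n a x)) (by
    rintro x y ⟨c, g, hc⟩
    refine Quot.sound ⟨c, g, ?_⟩
    refine Prod.ext (funext fun i => ?_) ?_
    · show (y : Fin n → k) i = _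
      rw [hc]
      simp [act, mkZero]
    · simp [act, mkZero])

/-- The stable locus `S` is invariant under the `kˣ × kˣ`-action;
`x ↦ orbit of (x, 1)` induces a well-defined injection of `X_{>0}/kˣ` into
`S/(kˣ × kˣ)` whose image is the set of orbits of points with `w ≠ 0`;
`x ↦ orbit of (x, 0)` induces a well-defined injection of `X^s/(kˣ × kˣ)` into
`S/(kˣ × kˣ)` whose image is the set of orbits of points with `w = 0`; and
`S/(kˣ × kˣ)` is the disjoint union of these two images. -/
theorem algebraic_cut_decomposition (ha : ∀ i, a i ≠ 0) :
    (∀ p ∈ stable k n a, ∀ c g : kˣ, act k n a c g p ∈ stable k n a) ∧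
    ∃ (f : Quot (scalarRel k n a) → Quot (orbitRel k n a))
      (f' : Quot (fullRel k n a) → Quot (orbitRel k n a)),
      (∀ (x : XPos k n a) (p : stable k n a),
          (p : (Fin n → k) × k) = ((x : Fin n → k), 1) →
          f (Quot.mk _ x) = Quot.mk _ p) ∧
      Injective f ∧
      Set.range f =
        {q | ∃ p : stable k n a, (p : (Fin n → k) × k).2 ≠ 0 ∧ Quot.mk _ p = q} ∧
      (∀ (x : XStable k n a) (p : stable k n a),
          (p : (Fin n → k) × k) = ((x : Fin n → k), 0) →
          f' (Quot.mk _ x) = Quot.mk _ p) ∧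
      Injective f' ∧
      Set.range f' =
        {q | ∃ p : stable k n a, (p : (Fin n → k) × k).2 = 0 ∧ Quot.mk _ p = q} ∧
      Set.range f ∩ Set.range f' = ∅ ∧
      Set.range f ∪ Set.range f' = Set.univ := by
  -- invariance of the stable locus
  have inv : ∀ p ∈ stable k n a, ∀ c g : kˣ, act k n a c g p ∈ stable k n a := by
    rintro ⟨x, w⟩ ⟨hx, h⟩ c g
    constructor
    · intro h0
      apply hx
      funext i
      exact (coord_zero c g (a i)).mp (congrFun h0 i)
    · rcases h with ⟨hw, i, hi, hai⟩ | ⟨hw, ⟨i, hi, hai⟩, ⟨j, hj, haj⟩⟩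
      · exact Or.inl ⟨mul_ne_zero (g⁻¹ : kˣ).ne_zero hw,
          i, fun h0 => hi ((coord_zero c g (a i)).mp h0), hai⟩
      · refine Or.inr ⟨?_, ⟨i, fun h0 => hi ((coord_zero c g (a i)).mp h0), hai⟩,
          ⟨j, fun h0 => hj ((coord_zero c g (a j)).mp h0), haj⟩⟩
        show ((g⁻¹ : kˣ) : k) * w = 0
        rw [show w = 0 from hw, mul_zero]
  -- range of fPos
  have hrange : Set.range (fPos k n a) =
      {q | ∃ p : stable k n a, (p : (Fin n → k) × k).2 ≠ 0 ∧ Quot.mk _ p = q} := by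
    ext q
    constructor
    · rintro ⟨u, rfl⟩
      induction u using Quot.ind with | _ x =>
      exact ⟨mkPos k n a x, one_ne_zero, rfl⟩
    · rintro ⟨p, hp2, rfl⟩
      set w : kˣ := Units.mk0 (p : (Fin n → k) × k).2 hp2 with hw
      set x' : Fin n → k := fun i => ((w ^ a i : kˣ) : k) * (p : (Fin n → k) × k).1 i
        with hx'def
      have hx' : x' ∈ XPos k n a := by
        constructor
        · intro h0
          apply p.2.1
          funext i
          exact (coord_zero' w (a i)).mp (congrFun h0 i)
        · rcases p.2.2 with ⟨_, i, hi, hai⟩ | ⟨h0, _⟩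
          · exact ⟨i, fun h0 => hi ((coord_zero' w (a i)).mp h0), hai⟩
          · exact absurd h0 hp2
      refine ⟨Quot.mk _ ⟨x', hx'⟩, ?_⟩
      show Quot.mk _ (mkPos k n a ⟨x', hx'⟩) = _
      refine (Quot.sound ⟨1, w, ?_⟩).symm
      refine Prod.ext (funext fun i => ?_) ?_
      · simp [mkPos, act, hx'def]
      · show (1 : k) = ((w⁻¹ : kˣ) : k) * (p : (Fin n → k) × k).2
        rw [show ((p : (Fin n → k) × k).2 : k) = (w : k) from rfl, Units.inv_mul]
  -- range of fZero
  have hrange' : Set.range (fZero k n a) =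
      {q | ∃ p : stable k n a, (p : (Fin n → k) × k).2 = 0 ∧ Quot.mk _ p = q} := by
    ext q
    constructor
    · rintro ⟨u, rfl⟩
      induction u using Quot.ind with | _ x =>
      exact ⟨mkZero k n a x, rfl, rfl⟩
    · rintro ⟨p, hp2, rfl⟩
      have hx : (p : (Fin n → k) × k).1 ∈ XStable k n a := by
        refine ⟨p.2.1, ?_⟩
        rcases p.2.2 with ⟨h0, _⟩ | ⟨_, h⟩
        · exact absurd hp2 h0
        · exact h
      have hpe : mkZero k n a ⟨(p : (Fin n → k) × k).1, hx⟩ = p :=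
        Subtype.ext (Prod.ext rfl hp2.symm)
      exact ⟨Quot.mk _ ⟨_, hx⟩, congrArg (Quot.mk _) hpe⟩
  refine ⟨inv, fPos k n a, fZero k n a, ?_, ?_, hrange, ?_, ?_, hrange', ?_, ?_⟩
  · -- well-definedness of fPos
    intro x p hp
    rw [show p = mkPos k n a x from Subtype.ext hp]
    rfl
  · -- injectivity of fPos
    have key : ∀ x y : XPos k n a,
        fPos k n a (Quot.mk _ x) = fPos k n a (Quot.mk _ y) →
        Quot.mk (scalarRel k n a) x = Quot.mk (scalarRel k n a) y := by
      intro x y h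
      rw [show fPos k n a (Quot.mk _ x) = Quot.mk _ (mkPos k n a x) from rfl,
        show fPos k n a (Quot.mk _ y) = Quot.mk _ (mkPos k n a y) from rfl,
        quot_eq' orbitRel_equiv] at h
      obtain ⟨c, g, hq⟩ := h
      have h2 : (1 : k) = ((g⁻¹ : kˣ) : k) * 1 := congrArg Prod.snd hq
      have hg : g = 1 := by
        rw [← inv_eq_one]
        exact Units.ext (by simpa using h2.symm)
      have h1 : (y : Fin n → k) =
          fun i => (c : k) * ((g ^ a i : kˣ) : k) * (x : Fin n → k) i :=
        congrArg Prod.fst hq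
      refine Quot.sound ⟨c, ?_⟩
      rw [h1]
      funext i
      simp [hg]
    intro u v h
    induction u using Quot.ind with | _ x =>
    induction v using Quot.ind with | _ y =>
    exact key x y h
  · -- well-definedness of fZero
    intro x p hp
    rw [show p = mkZero k n a x from Subtype.ext hp]
    rfl
  · -- injectivity of fZero
    have key : ∀ x y : XStable k n a,
        fZero k n a (Quot.mk _ x) = fZero k n a (Quot.mk _ y) →
        Quot.mk (fullRel k n a) x = Quot.mk (fullRel k n a) y := by
      intro x y h
      rw [show fZero k n a (Quot.mk _ x) = Quot.mk _ (mkZero k n a x) from rfl,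
        show fZero k n a (Quot.mk _ y) = Quot.mk _ (mkZero k n a y) from rfl,
        quot_eq' orbitRel_equiv] at h
      obtain ⟨c, g, hq⟩ := h
      exact Quot.sound ⟨c, g, congrArg Prod.fst hq⟩
    intro u v h
    induction u using Quot.ind with | _ x =>
    induction v using Quot.ind with | _ y =>
    exact key x y h
  · -- disjointness
    rw [Set.eq_empty_iff_forall_notMem]
    rintro q ⟨⟨u, rfl⟩, ⟨v, hv⟩⟩
    induction u using Quot.ind with | _ x =>
    induction v using Quot.ind with | _ y =>
    rw [show fZero k n a (Quot.mk _ y) = Quot.mk _ (mkZero k n a y) from rfl,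
      show fPos k n a (Quot.mk _ x) = Quot.mk _ (mkPos k n a x) from rfl,
      quot_eq' orbitRel_equiv] at hv
    obtain ⟨c, g, hq⟩ := hv
    have h2 : (1 : k) = ((g⁻¹ : kˣ) : k) * 0 := congrArg Prod.snd hq
    simpa using h2
  · -- union is everything
    rw [Set.eq_univ_iff_forall]
    intro q
    induction q using Quot.ind with | _ p =>
    rw [Set.mem_union, hrange, hrange']
    by_cases h : (p : (Fin n → k) × k).2 = 0
    · exact Or.inr ⟨p, h, rfl⟩
    · exact Or.inl ⟨p, h, rfl⟩


end AlgebraicCut
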